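/- arXiv:2405.04393 — 3 statements merged into one kernel-verified Lean document; each statement's English description precedes it below -/
import Mathlib

section
/- Let (Ω, F, P) be a probability space with a filtration F_0 ⊆ F_1 ⊆ ... ⊆ F_T, and let M_1, ..., M_T be real random variables such that M_t is F_t-measurable, E[M_t | F_{t−1}] = 0 almost surely, |M_t| ≤ 1/c almost surely for a constant c > 0, and E[M_t² | F_{t−1}] ≤ b_t almost surely for constants b_t ≥ 0. Then for every ε > 0, P( |Σ_{t=1}^T M_t| ≥ ε ) ≤ 2·exp( − ε² / ( 2·Σ_{t=1}^T b_t + 2ε/(3c) ) ). -/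
open MeasureTheory Finset Real

lemma aux_one_sub_mul_exp_le (u : ℝ) : (1 - u) * Real.exp u ≤ 1 := by
  have h1 : -u + 1 ≤ Real.exp (-u) := Real.add_one_le_exp (-u)
  have h2 : Real.exp (-u) * Real.exp u = 1 := by
    rw [← Real.exp_add]; simp
  nlinarith [Real.exp_pos u]

/-- For `u ≤ 0`, `exp u ≤ 1 + u + u²/2`. -/
lemma aux_exp_le_quadratic_of_nonpos {u : ℝ} (hu : u ≤ 0) :
    Real.exp u ≤ 1 + u + u ^ 2 / 2 := by
  set g : ℝ → ℝ := fun x => 1 + x + x ^ 2 / 2 - Real.exp x with hg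
  have hd : ∀ x : ℝ, HasDerivAt g (1 + x - Real.exp x) x := by
    intro x
    have h1 : HasDerivAt (fun x : ℝ => 1 + x + x ^ 2 / 2 - Real.exp x)
        (0 + 1 + (↑2 * x ^ (2 - 1)) / 2 - Real.exp x) x := by
      exact (((hasDerivAt_const x (1:ℝ)).add (hasDerivAt_id x)).add
        ((hasDerivAt_pow 2 x).div_const 2)).sub (Real.hasDerivAt_exp x)
    convert h1 using 1
    push_cast; ring
  have hanti : Antitone g := by
    refine antitone_of_deriv_nonpos (fun x => (hd x).differentiableAt) (fun x => ?_)
    rw [(hd x).deriv]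
    have := Real.add_one_le_exp x
    linarith
  have h0 : g 0 = 0 := by simp [hg]
  have := hanti hu
  rw [h0] at this
  simp only [hg] at this
  linarith

/-- For `u ≥ 0`, `(3 - u)(exp u - 1 - u) ≤ (3/2) u²`. -/
lemma aux_bennett_key {u : ℝ} (hu : 0 ≤ u) :
    (3 - u) * (Real.exp u - 1 - u) ≤ 3 / 2 * u ^ 2 := by
  set h1 : ℝ → ℝ := fun x => 3 * x + (Real.exp x - 1 - x) - (3 - x) * (Real.exp x - 1)
    with hh1
  have hd1 : ∀ x : ℝ, HasDerivAt h1 (1 + (x - 1) * Real.exp x) x := by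
    intro x
    have : HasDerivAt h1
        (3 * 1 + (Real.exp x - 0 - 1) - ((0 - 1) * (Real.exp x - 1) + (3 - x) * (Real.exp x - 0))) x := by
      refine HasDerivAt.sub (HasDerivAt.add ?_ ?_) (HasDerivAt.mul ?_ ?_)
      · exact (hasDerivAt_id x).const_mul 3
      · exact ((Real.hasDerivAt_exp x).sub (hasDerivAt_const x 1)).sub (hasDerivAt_id x)
      · exact (hasDerivAt_const x (3:ℝ)).sub (hasDerivAt_id x)
      · exact (Real.hasDerivAt_exp x).sub (hasDerivAt_const x 1)
    convert this using 1
    ring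
  have h1mono : Monotone h1 := by
    refine monotone_of_deriv_nonneg (fun x => (hd1 x).differentiableAt) (fun x => ?_)
    rw [(hd1 x).deriv]
    nlinarith [aux_one_sub_mul_exp_le x]
  have h1zero : h1 0 = 0 := by simp [hh1]
  have h1nonneg : ∀ x : ℝ, 0 ≤ x → 0 ≤ h1 x := by
    intro x hx
    have := h1mono hx
    rwa [h1zero] at this
  set h : ℝ → ℝ := fun x => 3 / 2 * x ^ 2 - (3 - x) * (Real.exp x - 1 - x) with hh
  have hd : ∀ x : ℝ, HasDerivAt h (h1 x) x := by
    intro x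
    have : HasDerivAt h
        (3 / 2 * (↑2 * x ^ (2 - 1)) - ((0 - 1) * (Real.exp x - 1 - x) + (3 - x) * (Real.exp x - 0 - 1))) x := by
      refine HasDerivAt.sub ?_ (HasDerivAt.mul ?_ ?_)
      · exact (hasDerivAt_pow 2 x).const_mul (3 / 2)
      · exact (hasDerivAt_const x (3:ℝ)).sub (hasDerivAt_id x)
      · exact ((Real.hasDerivAt_exp x).sub (hasDerivAt_const x 1)).sub (hasDerivAt_id x)
    convert this using 1
    simp only [hh1]; push_cast; ring
  have hmono : MonotoneOn h (Set.Ici 0) := by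
    refine monotoneOn_of_deriv_nonneg (convex_Ici 0)
      (Continuous.continuousOn (by fun_prop)) ?_ ?_
    · intro x _; exact (hd x).differentiableAt.differentiableWithinAt
    · intro x hx
      rw [(hd x).deriv]
      exact h1nonneg x (le_of_lt (by simpa using hx))
  have h0 : h 0 = 0 := by simp [hh]
  have := hmono (Set.self_mem_Ici) (Set.mem_Ici.mpr hu) hu
  rw [h0] at this
  simp only [hh] at this
  linarith

/-- Key pointwise bound: for `0 < a < 3` and `|u| ≤ a`,
`exp u ≤ 1 + u + u² · 3/(2(3-a))`. -/
lemma aux_exp_le {a u : ℝ} (ha0 : 0 < a) (ha3 : a < 3) (hu : |u| ≤ a) :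
    Real.exp u ≤ 1 + u + u ^ 2 * (3 / (2 * (3 - a))) := by
  have h3a : 0 < 3 - a := by linarith
  rcases le_or_gt 0 u with hu0 | hu0
  · have hua : u ≤ a := le_trans (le_abs_self u) hu
    have hk := aux_bennett_key hu0
    have hexp : 0 ≤ Real.exp u - 1 - u := by
      have := Real.add_one_le_exp u; linarith
    have h1 : (3 - a) * (Real.exp u - 1 - u) ≤ 3 / 2 * u ^ 2 := by
      nlinarith
    have h2 : Real.exp u - 1 - u ≤ 3 / 2 * u ^ 2 / (3 - a) := by
      rw [le_div_iff₀ h3a]; linarith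
    have h3 : 3 / 2 * u ^ 2 / (3 - a) = u ^ 2 * (3 / (2 * (3 - a))) := by
      field_simp
    linarith [h3 ▸ h2]
  · have h1 := aux_exp_le_quadratic_of_nonpos hu0.le
    have h2 : (1:ℝ) / 2 ≤ 3 / (2 * (3 - a)) := by
      rw [div_le_div_iff₀ (by norm_num) (by linarith)]
      linarith
    nlinarith [sq_nonneg u]

lemma aux_sum_Icc_succ (f : ℕ → ℝ) (n : ℕ) :
    ∑ t ∈ Icc 1 (n + 1), f t = (∑ t ∈ Icc 1 n, f t) + f (n + 1) := by
  rw [show Icc 1 (n + 1) = insert (n + 1) (Icc 1 n) by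
    ext x; simp only [mem_Icc, mem_insert]; omega,
    sum_insert (by simp [mem_Icc])]
  ring

theorem bernstein_one_sided {Ω : Type*} [m0 : MeasurableSpace Ω] (μ : Measure Ω)
    [IsProbabilityMeasure μ]
    (T : ℕ) (ℱ : ℕ → MeasurableSpace Ω)
    (hmono : ∀ s t : ℕ, s ≤ t → ℱ s ≤ ℱ t) (hle : ∀ t, ℱ t ≤ m0)
    (M : ℕ → Ω → ℝ) (c : ℝ) (hc : 0 < c) (b : ℕ → ℝ) (hb : ∀ t, 0 ≤ b t)
    (hmeas : ∀ t ∈ Icc 1 T, Measurable[ℱ t] (M t))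
    (hint : ∀ t ∈ Icc 1 T, Integrable (M t) μ)
    (hmean : ∀ t ∈ Icc 1 T, μ[M t | ℱ (t - 1)] =ᵐ[μ] 0)
    (hbd : ∀ t ∈ Icc 1 T, ∀ᵐ ω ∂μ, |M t ω| ≤ 1 / c)
    (hvar : ∀ t ∈ Icc 1 T, ∀ᵐ ω ∂μ, (μ[fun ω' => (M t ω') ^ 2 | ℱ (t - 1)]) ω ≤ b t)
    (ε : ℝ) (hε : 0 < ε) :
    μ {ω | ε ≤ ∑ t ∈ Icc 1 T, M t ω}
      ≤ ENNReal.ofReal (Real.exp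
          (-(ε ^ 2 / (2 * ∑ t ∈ Icc 1 T, b t + 2 * ε / (3 * c))))) := by
  set V : ℝ := ∑ t ∈ Icc 1 T, b t with hV
  have hV0 : 0 ≤ V := Finset.sum_nonneg fun t _ => hb t
  -- reduce to the case of a strictly positive variance proxy `V + δ`
  suffices hsuff : ∀ δ : ℝ, 0 < δ → μ {ω | ε ≤ ∑ t ∈ Icc 1 T, M t ω}
      ≤ ENNReal.ofReal (Real.exp (-(ε ^ 2 / (2 * V + 2 * δ + 2 * ε / (3 * c))))) by
    have hden : (0:ℝ) < 2 * V + 2 * 0 + 2 * ε / (3 * c) := by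
      have : 0 < 2 * ε / (3 * c) := by positivity
      linarith
    have hcont : ContinuousAt
        (fun δ : ℝ => ENNReal.ofReal (Real.exp (-(ε ^ 2 / (2 * V + 2 * δ + 2 * ε / (3 * c)))))) 0 := by
      refine ENNReal.continuous_ofReal.continuousAt.comp ?_
      refine Real.continuous_exp.continuousAt.comp ?_
      refine ContinuousAt.neg ?_
      exact ContinuousAt.div continuousAt_const (by fun_prop) (ne_of_gt hden)
    have htend : Filter.Tendsto
        (fun δ : ℝ => ENNReal.ofReal (Real.exp (-(ε ^ 2 / (2 * V + 2 * δ + 2 * ε / (3 * c))))))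
        (nhdsWithin 0 (Set.Ioi 0))
        (nhds (ENNReal.ofReal (Real.exp (-(ε ^ 2 / (2 * V + 2 * 0 + 2 * ε / (3 * c))))))) :=
      hcont.tendsto.mono_left nhdsWithin_le_nhds
    have hlim : μ {ω | ε ≤ ∑ t ∈ Icc 1 T, M t ω}
        ≤ ENNReal.ofReal (Real.exp (-(ε ^ 2 / (2 * V + 2 * 0 + 2 * ε / (3 * c))))) := by
      refine ge_of_tendsto htend ?_
      filter_upwards [self_mem_nhdsWithin] with δ hδ
      exact hsuff δ hδ
    norm_num at hlim
    exact hlim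
  intro δ hδ
  set W : ℝ := V + δ + ε / (3 * c) with hWdef
  have hW0 : 0 < W := by
    have : 0 < ε / (3 * c) := by positivity
    simp only [hWdef]; linarith
  set lam : ℝ := ε / W with hlamdef
  have hlam : 0 < lam := div_pos hε hW0
  have hlam3 : lam < 3 * c := by
    rw [hlamdef, div_lt_iff₀ hW0]
    simp only [hWdef]
    have h1 : 3 * c * (ε / (3 * c)) = ε := by field_simp
    nlinarith [mul_pos hc hδ, mul_pos hc (lt_of_le_of_lt (le_refl 0) hδ)]
  have ha0 : 0 < lam / c := div_pos hlam hc
  have ha3 : lam / c < 3 := by rw [div_lt_iff₀ hc]; linarith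
  set K : ℝ := 3 * lam ^ 2 / (2 * (3 - lam / c)) with hKdef
  have hK0 : 0 ≤ K := by
    apply div_nonneg (by positivity)
    nlinarith
  -- pointwise exponential bound
  have hpt : ∀ x : ℝ, |x| ≤ 1 / c → Real.exp (lam * x) ≤ 1 + lam * x + K * x ^ 2 := by
    intro x hx
    have habs : |lam * x| ≤ lam / c := by
      rw [abs_mul, abs_of_pos hlam]
      calc lam * |x| ≤ lam * (1 / c) := by
            exact mul_le_mul_of_nonneg_left hx hlam.le
        _ = lam / c := by ring
    have := aux_exp_le ha0 ha3 habs
    calc Real.exp (lam * x) ≤ 1 + lam * x + (lam * x) ^ 2 * (3 / (2 * (3 - lam / c))) := this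
      _ = 1 + lam * x + K * x ^ 2 := by rw [hKdef]; ring
  -- helpers
  have hmem : ∀ {n t : ℕ}, n ≤ T → t ∈ Icc 1 n → t ∈ Icc 1 T := by
    intro n t hn ht
    simp only [mem_Icc] at *
    omega
  have hSmeas : ∀ n, n ≤ T → Measurable[ℱ n] (fun ω => ∑ t ∈ Icc 1 n, M t ω) := by
    intro n hn
    apply Finset.measurable_sum
    intro t ht
    exact (hmeas t (hmem hn ht)).mono (hmono t n (mem_Icc.mp ht).2) le_rfl
  have hSbdd : ∀ n, n ≤ T → ∀ᵐ ω ∂μ, |∑ t ∈ Icc 1 n, M t ω| ≤ n / c := by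
    intro n hn
    have hall : ∀ᵐ ω ∂μ, ∀ t ∈ Icc 1 n, |M t ω| ≤ 1 / c := by
      rw [Filter.eventually_all_finset]
      intro t ht; exact hbd t (hmem hn ht)
    filter_upwards [hall] with ω hω
    have hcard : (Icc 1 n).card = n := by rw [Nat.card_Icc]; omega
    calc |∑ t ∈ Icc 1 n, M t ω| ≤ ∑ t ∈ Icc 1 n, |M t ω| := Finset.abs_sum_le_sum_abs _ _
      _ ≤ ∑ _t ∈ Icc 1 n, 1 / c := Finset.sum_le_sum hω
      _ = n / c := by rw [Finset.sum_const, hcard, nsmul_eq_mul]; ring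
  have hMint2 : ∀ t ∈ Icc 1 T, Integrable (fun ω => (M t ω) ^ 2) μ := by
    intro t ht
    refine Integrable.mono' (integrable_const ((1 / c) ^ 2)) ?_ ?_
    · exact (((hmeas t ht).mono (hle t) le_rfl).pow_const 2).aestronglyMeasurable
    · filter_upwards [hbd t ht] with ω hω
      rw [Real.norm_eq_abs, abs_of_nonneg (sq_nonneg _)]
      calc (M t ω) ^ 2 = |M t ω| ^ 2 := (sq_abs _).symm
        _ ≤ (1 / c) ^ 2 := pow_le_pow_left₀ (abs_nonneg _) hω 2
  have hexpMint : ∀ t ∈ Icc 1 T, Integrable (fun ω => Real.exp (lam * M t ω)) μ := by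
    intro t ht
    refine Integrable.mono' (integrable_const (Real.exp (lam * (1 / c)))) ?_ ?_
    · exact (Real.measurable_exp.comp
        (((hmeas t ht).mono (hle t) le_rfl).const_mul lam)).aestronglyMeasurable
    · filter_upwards [hbd t ht] with ω hω
      rw [Real.norm_eq_abs, abs_of_pos (Real.exp_pos _)]
      exact Real.exp_le_exp.mpr
        (mul_le_mul_of_nonneg_left (le_trans (le_abs_self _) hω) hlam.le)
  -- key MGF induction
  have key : ∀ n, n ≤ T →
      Integrable (fun ω => Real.exp (lam * ∑ t ∈ Icc 1 n, M t ω)) μ ∧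
      ∫ ω, Real.exp (lam * ∑ t ∈ Icc 1 n, M t ω) ∂μ ≤
        Real.exp (K * ∑ t ∈ Icc 1 n, b t) := by
    intro n
    induction n with
    | zero =>
      intro _
      have h0 : Icc 1 0 = (∅ : Finset ℕ) := by
        ext x; simp only [mem_Icc, Finset.notMem_empty, iff_false]; omega
      constructor
      · simpa [h0] using integrable_const (1 : ℝ)
      · simp [h0]
    | succ n ih =>
      intro hn1
      have hn : n ≤ T := by omega
      obtain ⟨ihInt, ihBound⟩ := ih hn
      have htm : n + 1 ∈ Icc 1 T := by simp only [mem_Icc]; omega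
      have hsum : ∀ ω, ∑ t ∈ Icc 1 (n + 1), M t ω = (∑ t ∈ Icc 1 n, M t ω) + M (n + 1) ω :=
        fun ω => aux_sum_Icc_succ (fun t => M t ω) n
      set f : Ω → ℝ := fun ω => Real.exp (lam * ∑ t ∈ Icc 1 n, M t ω) with hfdef
      set g : Ω → ℝ := fun ω => Real.exp (lam * M (n + 1) ω) with hgdef
      have hfg : ∀ ω, Real.exp (lam * ∑ t ∈ Icc 1 (n + 1), M t ω) = f ω * g ω := by
        intro ω; rw [hfdef, hgdef]; rw [hsum, mul_add, Real.exp_add]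
      have hfmeasn : StronglyMeasurable[ℱ n] f :=
        (Real.measurable_exp.comp ((hSmeas n hn).const_mul lam)).stronglyMeasurable
      have hfmeas : AEStronglyMeasurable f μ :=
        ((hfmeasn.measurable.mono (hle n) le_rfl)).aestronglyMeasurable
      have hgmeas : AEStronglyMeasurable g μ :=
        (Real.measurable_exp.comp
          (((hmeas _ htm).mono (hle _) le_rfl).const_mul lam)).aestronglyMeasurable
      have hgbdd : ∀ᵐ ω ∂μ, ‖g ω‖ ≤ Real.exp (lam * (1 / c)) := by
        filter_upwards [hbd _ htm] with ω hω
        rw [Real.norm_eq_abs, abs_of_pos (Real.exp_pos _)]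
        exact Real.exp_le_exp.mpr
          (mul_le_mul_of_nonneg_left (le_trans (le_abs_self _) hω) hlam.le)
      have hfbdd : ∀ᵐ ω ∂μ, ‖f ω‖ ≤ Real.exp (lam * (↑n / c)) := by
        filter_upwards [hSbdd n hn] with ω hω
        rw [Real.norm_eq_abs, abs_of_pos (Real.exp_pos _)]
        exact Real.exp_le_exp.mpr
          (mul_le_mul_of_nonneg_left (le_trans (le_abs_self _) hω) hlam.le)
      have hfgint : Integrable (fun ω => f ω * g ω) μ := by
        have := ihInt.bdd_mul hgmeas hgbdd
        simpa [mul_comm] using this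
      have hgint : Integrable g μ := hexpMint _ htm
      -- conditional expectation bound for g
      set φ : Ω → ℝ := fun ω => 1 + lam * M (n + 1) ω + K * (M (n + 1) ω) ^ 2 with hφdef
      have hφint : Integrable φ μ := by
        exact ((integrable_const (1 : ℝ)).add ((hint _ htm).const_mul lam)).add
          ((hMint2 _ htm).const_mul K)
      have hgφ : g ≤ᵐ[μ] φ := by
        filter_upwards [hbd _ htm] with ω hω
        exact hpt (M (n + 1) ω) hω
      have h1 : μ[g|ℱ n] ≤ᵐ[μ] μ[φ|ℱ n] := condExp_mono hgint hφint hgφ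
      have hφ_eq : μ[φ|ℱ n] =ᵐ[μ] fun ω => 1 + lam * (μ[M (n + 1)|ℱ n]) ω +
          K * (μ[fun ω' => (M (n + 1) ω') ^ 2|ℱ n]) ω := by
        have e1 : μ[φ|ℱ n] =ᵐ[μ] μ[fun ω => 1 + lam * M (n + 1) ω|ℱ n] +
            μ[fun ω => K * (M (n + 1) ω) ^ 2|ℱ n] :=
          condExp_add ((integrable_const (1 : ℝ)).add ((hint _ htm).const_mul lam))
            ((hMint2 _ htm).const_mul K) _
        have e2 : μ[fun ω => 1 + lam * M (n + 1) ω|ℱ n] =ᵐ[μ]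
            (fun _ => (1 : ℝ)) + μ[fun ω => lam * M (n + 1) ω|ℱ n] := by
          refine (condExp_add (integrable_const (1 : ℝ)) ((hint _ htm).const_mul lam) _).trans ?_
          rw [condExp_const (hle n)]
        have e3 : μ[fun ω => lam * M (n + 1) ω|ℱ n] =ᵐ[μ]
            fun ω => lam * (μ[M (n + 1)|ℱ n]) ω := condExp_smul lam (M (n + 1)) _
        have e4 : μ[fun ω => K * (M (n + 1) ω) ^ 2|ℱ n] =ᵐ[μ]
            fun ω => K * (μ[fun ω' => (M (n + 1) ω') ^ 2|ℱ n]) ω :=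
          condExp_smul K _ _
        filter_upwards [e1, e2, e3, e4] with ω he1 he2 he3 he4
        simp only [Pi.add_apply] at he1 he2
        rw [he1, he2, he3, he4]
      have hM0 : μ[M (n + 1)|ℱ n] =ᵐ[μ] 0 := by
        simpa using hmean _ htm
      have hM2b : ∀ᵐ ω ∂μ, (μ[fun ω' => (M (n + 1) ω') ^ 2|ℱ n]) ω ≤ b (n + 1) := by
        simpa using hvar _ htm
      have hcondg : μ[g|ℱ n] ≤ᵐ[μ] fun _ => Real.exp (K * b (n + 1)) := by
        filter_upwards [h1, hφ_eq, hM0, hM2b] with ω hω1 hω2 hω3 hω4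
        have hx : (μ[g|ℱ n]) ω ≤ 1 + K * b (n + 1) := by
          rw [hω2] at hω1
          rw [hω3] at hω1
          simp only [Pi.zero_apply, mul_zero, add_zero] at hω1
          nlinarith [hK0, hω4]
        calc (μ[g|ℱ n]) ω ≤ 1 + K * b (n + 1) := hx
          _ ≤ Real.exp (K * b (n + 1)) := by
            linarith [Real.add_one_le_exp (K * b (n + 1))]
      have hprod_int : Integrable (fun ω => f ω * (μ[g|ℱ n]) ω) μ :=
        integrable_condExp.bdd_mul hfmeas hfbdd
      refine ⟨hfgint.congr (Filter.Eventually.of_forall fun ω => (hfg ω).symm), ?_⟩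
      calc ∫ ω, Real.exp (lam * ∑ t ∈ Icc 1 (n + 1), M t ω) ∂μ
          = ∫ ω, f ω * g ω ∂μ := integral_congr_ae (Filter.Eventually.of_forall hfg)
        _ = ∫ ω, (μ[fun ω' => f ω' * g ω'|ℱ n]) ω ∂μ := (integral_condExp (hle n)).symm
        _ = ∫ ω, f ω * (μ[g|ℱ n]) ω ∂μ :=
            integral_congr_ae (condExp_mul_of_stronglyMeasurable_left hfmeasn hfgint hgint)
        _ ≤ ∫ ω, f ω * Real.exp (K * b (n + 1)) ∂μ := by
            refine integral_mono_ae hprod_int (ihInt.mul_const _) ?_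
            filter_upwards [hcondg] with ω hω
            exact mul_le_mul_of_nonneg_left hω (Real.exp_pos _).le
        _ = (∫ ω, f ω ∂μ) * Real.exp (K * b (n + 1)) := integral_mul_const _ _
        _ ≤ Real.exp (K * ∑ t ∈ Icc 1 n, b t) * Real.exp (K * b (n + 1)) :=
            mul_le_mul_of_nonneg_right ihBound (Real.exp_pos _).le
        _ = Real.exp (K * ∑ t ∈ Icc 1 (n + 1), b t) := by
            rw [← Real.exp_add, aux_sum_Icc_succ b n]; ring_nf
  -- Chernoff bound
  obtain ⟨hTint, hTbound⟩ := key T le_rfl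
  have chern := ProbabilityTheory.measure_ge_le_exp_mul_mgf (μ := μ)
    (X := fun ω => ∑ t ∈ Icc 1 T, M t ω) (t := lam) ε hlam.le hTint
  have hmgf : ProbabilityTheory.mgf (fun ω => ∑ t ∈ Icc 1 T, M t ω) μ lam ≤
      Real.exp (K * V) := hTbound
  have hVδ : (0 : ℝ) < V + δ := by linarith
  have hlamW : lam * W = ε := by
    rw [hlamdef, div_mul_cancel₀ _ hW0.ne']
  have hKV : K * V ≤ lam * ε / 2 := by
    have h3a0 : (0 : ℝ) < 3 - lam / c := by linarith
    have h6 : 3 * (c * W) = 3 * c * (V + δ) + ε := by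
      rw [hWdef]; field_simp
    have h7 : lam * (c * W) = c * ε := by
      rw [show lam * (c * W) = c * (lam * W) by ring, hlamW]
    have h8 : 3 * lam ^ 2 * (c * W) = 3 * c * lam ^ 2 * (V + δ) + lam ^ 2 * ε := by
      linear_combination lam ^ 2 * h6
    have h9 : 3 * lam * (lam * (c * W)) = 3 * lam * (c * ε) := by rw [h7]
    have main : 3 * lam ^ 2 * V * c ≤ lam * ε * (3 * c - lam) := by
      nlinarith [h8, h9, mul_nonneg (mul_nonneg (sq_nonneg lam) hc.le) hδ.le]
    rw [hKdef, div_mul_eq_mul_div,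
      div_le_iff₀ (by linarith : (0 : ℝ) < 2 * (3 - lam / c))]
    have hrhs : lam * ε / 2 * (2 * (3 - lam / c)) = lam * ε * (3 * c - lam) / c := by
      field_simp
    rw [hrhs, le_div_iff₀ hc]
    exact main
  have he : ε ^ 2 / (2 * V + 2 * δ + 2 * ε / (3 * c)) = lam * ε / 2 := by
    rw [hlamdef, hWdef, div_mul_eq_mul_div, div_div, ← pow_two]
    congr 1
    ring
  have htoReal : (μ {ω | ε ≤ ∑ t ∈ Icc 1 T, M t ω}).toReal ≤
      Real.exp (-(ε ^ 2 / (2 * V + 2 * δ + 2 * ε / (3 * c)))) := by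
    refine le_trans chern ?_
    calc Real.exp (-lam * ε) * ProbabilityTheory.mgf (fun ω => ∑ t ∈ Icc 1 T, M t ω) μ lam
        ≤ Real.exp (-lam * ε) * Real.exp (K * V) :=
          mul_le_mul_of_nonneg_left hmgf (Real.exp_pos _).le
      _ = Real.exp (-lam * ε + K * V) := (Real.exp_add _ _).symm
      _ ≤ Real.exp (-(ε ^ 2 / (2 * V + 2 * δ + 2 * ε / (3 * c)))) := by
          apply Real.exp_le_exp.mpr
          rw [he]
          linarith [hKV]
  calc μ {ω | ε ≤ ∑ t ∈ Icc 1 T, M t ω}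
      = ENNReal.ofReal ((μ {ω | ε ≤ ∑ t ∈ Icc 1 T, M t ω}).toReal) :=
        (ENNReal.ofReal_toReal (measure_ne_top μ _)).symm
    _ ≤ ENNReal.ofReal (Real.exp (-(ε ^ 2 / (2 * V + 2 * δ + 2 * ε / (3 * c))))) :=
        ENNReal.ofReal_le_ofReal htoReal

/-- Two-sided Freedman/Bernstein-type concentration for a martingale difference
sequence: under the same hypotheses as the Bennett bound,
`P(|∑ M_t| ≥ ε) ≤ 2·exp(−ε²/(2∑b_t + 2ε/(3c)))`. -/
theorem stmt_5 {Ω : Type*} [m0 : MeasurableSpace Ω] (μ : Measure Ω) [IsProbabilityMeasure μ]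
    (T : ℕ) (ℱ : ℕ → MeasurableSpace Ω)
    (hmono : ∀ s t : ℕ, s ≤ t → ℱ s ≤ ℱ t) (hle : ∀ t, ℱ t ≤ m0)
    (M : ℕ → Ω → ℝ) (c : ℝ) (hc : 0 < c) (b : ℕ → ℝ) (hb : ∀ t, 0 ≤ b t)
    (hmeas : ∀ t ∈ Icc 1 T, Measurable[ℱ t] (M t))
    (hint : ∀ t ∈ Icc 1 T, Integrable (M t) μ)
    (hmean : ∀ t ∈ Icc 1 T, μ[M t | ℱ (t - 1)] =ᵐ[μ] 0)
    (hbd : ∀ t ∈ Icc 1 T, ∀ᵐ ω ∂μ, |M t ω| ≤ 1 / c)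
    (hvar : ∀ t ∈ Icc 1 T, ∀ᵐ ω ∂μ, (μ[fun ω' => (M t ω') ^ 2 | ℱ (t - 1)]) ω ≤ b t)
    (ε : ℝ) (hε : 0 < ε) :
    μ {ω | ε ≤ |∑ t ∈ Icc 1 T, M t ω|}
      ≤ ENNReal.ofReal (2 * Real.exp
          (-(ε ^ 2 / (2 * ∑ t ∈ Icc 1 T, b t + 2 * ε / (3 * c))))) := by
  set N : ℕ → Ω → ℝ := fun t ω => -(M t ω) with hN
  have h1 := bernstein_one_sided μ T ℱ hmono hle M c hc b hb hmeas hint hmean hbd hvar ε hε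
  have h2 := bernstein_one_sided μ T ℱ hmono hle N c hc b hb
    (fun t ht => (hmeas t ht).neg)
    (fun t ht => (hint t ht).neg)
    (fun t ht => by
      have hcn : μ[N t|ℱ (t - 1)] =ᵐ[μ] -μ[M t|ℱ (t - 1)] := condExp_neg (M t) _
      filter_upwards [hcn, hmean t ht] with ω hω1 hω2
      simp only [Pi.neg_apply, Pi.zero_apply] at *
      rw [hω1, hω2]; ring)
    (fun t ht => by
      filter_upwards [hbd t ht] with ω hω
      simpa [hN, abs_neg] using hω)
    (fun t ht => by
      have hEq : (fun ω' => (N t ω') ^ 2) = fun ω' => (M t ω') ^ 2 := by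
        funext ω'; simp only [hN]; ring
      rw [hEq]
      exact hvar t ht)
    ε hε
  have hsub : {ω | ε ≤ |∑ t ∈ Icc 1 T, M t ω|} ⊆
      {ω | ε ≤ ∑ t ∈ Icc 1 T, M t ω} ∪ {ω | ε ≤ ∑ t ∈ Icc 1 T, N t ω} := by
    intro ω hω
    simp only [Set.mem_setOf_eq] at hω
    rcases le_abs.mp hω with h | h
    · exact Or.inl h
    · refine Or.inr ?_
      simp only [hN, Set.mem_setOf_eq, Finset.sum_neg_distrib]
      exact h
  calc μ {ω | ε ≤ |∑ t ∈ Icc 1 T, M t ω|}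
      ≤ μ ({ω | ε ≤ ∑ t ∈ Icc 1 T, M t ω} ∪ {ω | ε ≤ ∑ t ∈ Icc 1 T, N t ω}) :=
        measure_mono hsub
    _ ≤ μ {ω | ε ≤ ∑ t ∈ Icc 1 T, M t ω} + μ {ω | ε ≤ ∑ t ∈ Icc 1 T, N t ω} :=
        measure_union_le _ _
    _ ≤ ENNReal.ofReal (Real.exp (-(ε ^ 2 / (2 * ∑ t ∈ Icc 1 T, b t + 2 * ε / (3 * c))))) +
        ENNReal.ofReal (Real.exp (-(ε ^ 2 / (2 * ∑ t ∈ Icc 1 T, b t + 2 * ε / (3 * c))))) :=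
        add_le_add h1 h2
    _ = ENNReal.ofReal (2 * Real.exp
          (-(ε ^ 2 / (2 * ∑ t ∈ Icc 1 T, b t + 2 * ε / (3 * c))))) := by
        rw [← ENNReal.ofReal_add (Real.exp_nonneg _) (Real.exp_nonneg _)]
        norm_num [two_mul]
end

section
/- Let J ≥ 2, let β_2 ≥ β_1 > 0, and let d_1, ..., d_J ≥ 0 be reals such that Σ_{j=1}^J exp(−β_1·d_j) ≥ 1. Then log( Σ_{j=1}^J exp(−β_1·d_j) / Σ_{j=1}^J exp(−β_2·d_j) ) ≤ ((β_2 − β_1)/β_1)·log J. -/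
/-- Lemma C.2: for `J ≥ 2`, `β₂ ≥ β₁ > 0` and `d_j ≥ 0` with
`∑_j exp(−β₁ d_j) ≥ 1`, one has
`log(∑_j exp(−β₁ d_j) / ∑_j exp(−β₂ d_j)) ≤ ((β₂ − β₁)/β₁)·log J`. -/
theorem stmt_16 (J : ℕ) (hJ : 2 ≤ J) (β₁ β₂ : ℝ) (hβ₁ : 0 < β₁) (hβ : β₁ ≤ β₂)
    (d : Fin J → ℝ) (hd : ∀ j, 0 ≤ d j)
    (hsum : 1 ≤ ∑ j, Real.exp (-β₁ * d j)) :
    Real.log ((∑ j, Real.exp (-β₁ * d j)) / (∑ j, Real.exp (-β₂ * d j)))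
      ≤ (β₂ - β₁) / β₁ * Real.log J := by
  set p : ℝ := β₂ / β₁ with hp
  have hp1 : 1 ≤ p := (one_le_div hβ₁).mpr hβ
  have hJ0 : (0 : ℝ) < (J : ℝ) := by positivity
  set S₁ : ℝ := ∑ j, Real.exp (-β₁ * d j) with hS₁
  set S₂ : ℝ := ∑ j, Real.exp (-β₂ * d j) with hS₂
  have hS₂pos : 0 < S₂ := Finset.sum_pos (fun j _ => Real.exp_pos _) (by
    simp [Finset.univ_nonempty_iff, ← Fin.pos_iff_nonempty]; omega)
  have hS₁pos : 0 < S₁ := lt_of_lt_of_le one_pos hsum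
  -- key: a j ^ p = exp(-β₂ d j)
  have key : ∀ j : Fin J, Real.exp (-β₁ * d j) ^ p = Real.exp (-β₂ * d j) := by
    intro j
    rw [← Real.exp_mul]
    congr 1
    field_simp [hp]
    have hβp : β₁ * p = β₂ := by rw [hp]; field_simp
    linear_combination -(d j) * hβp
  -- Jensen with weights 1/J
  have jensen : (∑ j, (1 / (J : ℝ)) * Real.exp (-β₁ * d j)) ^ p
      ≤ ∑ j, (1 / (J : ℝ)) * Real.exp (-β₁ * d j) ^ p := by
    apply Real.rpow_arith_mean_le_arith_mean_rpow Finset.univ _ _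
      (fun i _ => by positivity)
      (by simp [Finset.card_univ]; field_simp)
      (fun i _ => (Real.exp_pos _).le) hp1
  have h1 : (S₁ / J) ^ p ≤ S₂ / J := by
    calc (S₁ / J) ^ p = (∑ j, (1 / (J : ℝ)) * Real.exp (-β₁ * d j)) ^ p := by
          rw [← Finset.mul_sum]; congr 1; ring
      _ ≤ ∑ j, (1 / (J : ℝ)) * Real.exp (-β₁ * d j) ^ p := jensen
      _ = S₂ / J := by
          simp_rw [key]; rw [← Finset.mul_sum]; ring
  -- take logs
  have hlog : p * (Real.log S₁ - Real.log J) ≤ Real.log S₂ - Real.log J := by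
    have := Real.log_le_log (by positivity) h1
    rwa [Real.log_rpow (by positivity), Real.log_div hS₁pos.ne' hJ0.ne',
      Real.log_div hS₂pos.ne' hJ0.ne'] at this
  have hlogS₁ : 0 ≤ Real.log S₁ := Real.log_nonneg hsum
  have hlogJ : 0 ≤ Real.log J := Real.log_nonneg (by exact_mod_cast Nat.one_le_of_lt hJ)
  rw [Real.log_div hS₁pos.ne' hS₂pos.ne']
  have hpβ : (β₂ - β₁) / β₁ = p - 1 := by rw [hp, sub_div, div_self hβ₁.ne']
  rw [hpβ]
  nlinarith [hlog, hlogS₁, hlogJ, hp1]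
end

section
/- Fix T ≥ 1, J ≥ 2, α ∈ [0, 1], and c ∈ (0, 1]. Let s_1, ..., s_T ∈ ℝ be scores, let Δ_1, ..., Δ_T ∈ [0, 1/c] be weights, and for each expert j ∈ {1, ..., J} let (τ_{j,t})_{t=0}^{T−1} be an arbitrary real sequence of expert quantiles such that 0 ≤ ρ_α(s_t, τ_{j,t−1}) ≤ 1 for all j and all t ∈ {1, ..., T}. Define the expert weights ω_{j,0} = 1 and, for t ≥ 1, ω_{j,t} = exp( −(1/sqrt(t+1))·Σ_{t'=1}^{t} Δ_{t'}·ρ_α(s_{t'}, τ_{j,t'−1}) ), and define the aggregated quantiles τ̄_{t−1} = ( Σ_{j=1}^J ω_{j,t−1}·τ_{j,t−1} ) / ( Σ_{j=1}^J ω_{j,t−1} ) for t = 1, ..., T. Then (1/T)·Σ_{t=1}^T Δ_t·ρ_α(s_t, τ̄_{t−1}) − min_{j ∈ {1,...,J}} (1/T)·Σ_{t=1}^T Δ_t·ρ_α(s_t, τ_{j,t−1}) ≤ 1/(4c²·sqrt(T)) + 2·(log J)/sqrt(T). -/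
open Finset

/-- The check (pinball) loss `ρ_α(s, τ) = (s − τ)·(α − 1{s < τ})`. -/
noncomputable def checkLoss (α s τ : ℝ) : ℝ := (s - τ) * (α - if s < τ then 1 else 0)


section Aux

lemma checkLoss_eq_max (α s τ : ℝ) :
    checkLoss α s τ = max (α * (s - τ)) ((α - 1) * (s - τ)) := by
  unfold checkLoss
  by_cases h : s < τ
  · rw [if_pos h, max_eq_right (by nlinarith)]; ring
  · rw [if_neg h, max_eq_left (by push_neg at h; nlinarith)]; ring

lemma checkLoss_convex {J : ℕ} (w t : Fin J → ℝ) (hw : ∀ j, 0 ≤ w j)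
    (hsum : ∑ j, w j = 1) (α s : ℝ) :
    checkLoss α s (∑ j, w j * t j) ≤ ∑ j, w j * checkLoss α s (t j) := by
  rw [checkLoss_eq_max]
  have key : ∀ a : ℝ, a * (s - ∑ j, w j * t j) = ∑ j, w j * (a * (s - t j)) := by
    intro a
    have : a * (s - ∑ j, w j * t j) = a * s * (∑ j, w j) - a * ∑ j, w j * t j := by
      rw [hsum]; ring
    rw [this, Finset.mul_sum, Finset.mul_sum, ← Finset.sum_sub_distrib]
    exact Finset.sum_congr rfl fun j _ => by ring
  apply max_le
  · rw [key α]
    refine Finset.sum_le_sum fun j _ => mul_le_mul_of_nonneg_left ?_ (hw j)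
    rw [checkLoss_eq_max]; exact le_max_left _ _
  · rw [key (α - 1)]
    refine Finset.sum_le_sum fun j _ => mul_le_mul_of_nonneg_left ?_ (hw j)
    rw [checkLoss_eq_max]; exact le_max_right _ _

lemma hoeffding_scalar {p : ℝ} (hp0 : 0 ≤ p) (hp1 : p ≤ 1) (h : ℝ) :
    Real.log (1 - p + p * Real.exp h) ≤ p * h + h ^ 2 / 8 := by
  have hd : ∀ x : ℝ, 0 < 1 - p + p * Real.exp x := by
    intro x
    rcases le_or_gt (Real.exp x) 1 with hx | hx
    · nlinarith [Real.exp_pos x]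
    · nlinarith
  set φ : ℝ → ℝ := fun x => p * x + x ^ 2 / 8 - Real.log (1 - p + p * Real.exp x) with hφ
  set ψ : ℝ → ℝ := fun x => p + x / 4 - p * Real.exp x / (1 - p + p * Real.exp x) with hψ
  have hdφ : ∀ x, HasDerivAt φ (ψ x) x := by
    intro x
    have h1 : HasDerivAt (fun x : ℝ => 1 - p + p * Real.exp x) (p * Real.exp x) x := by
      simpa using ((Real.hasDerivAt_exp x).const_mul p).const_add (1 - p)
    have h2 : HasDerivAt (fun x : ℝ => Real.log (1 - p + p * Real.exp x))
        (p * Real.exp x / (1 - p + p * Real.exp x)) x := h1.log (hd x).ne'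
    have h3 : HasDerivAt (fun x : ℝ => p * x + x ^ 2 / 8) (p + 2 * x / 8) x := by
      have := ((hasDerivAt_id x).const_mul p).add
        (((hasDerivAt_pow 2 x)).div_const 8)
      simp at this; exact this
    have := h3.sub h2
    refine this.congr_deriv ?_
    simp only [hψ]; ring
  have hdψ : ∀ x, HasDerivAt ψ
      (1 / 4 - p * Real.exp x * (1 - p) / (1 - p + p * Real.exp x) ^ 2) x := by
    intro x
    have h1 : HasDerivAt (fun x : ℝ => 1 - p + p * Real.exp x) (p * Real.exp x) x := by
      simpa using ((Real.hasDerivAt_exp x).const_mul p).const_add (1 - p)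
    have h0 : HasDerivAt (fun x : ℝ => p * Real.exp x) (p * Real.exp x) x :=
      (Real.hasDerivAt_exp x).const_mul p
    have h2 : HasDerivAt (fun x : ℝ => p * Real.exp x / (1 - p + p * Real.exp x))
        ((p * Real.exp x * (1 - p + p * Real.exp x) - p * Real.exp x * (p * Real.exp x)) /
          (1 - p + p * Real.exp x) ^ 2) x := h0.div h1 (hd x).ne'
    have h3 : HasDerivAt (fun x : ℝ => p + x / 4) (1 / 4) x := by
      simpa using ((hasDerivAt_id x).div_const 4).const_add p
    have := h3.sub h2
    refine this.congr_deriv ?_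
    ring
  have hψnonneg : ∀ x, (0:ℝ) ≤ 1 / 4 - p * Real.exp x * (1 - p) / (1 - p + p * Real.exp x) ^ 2 := by
    intro x
    set d := 1 - p + p * Real.exp x with hdd
    have hdpos := hd x
    have hu : p * Real.exp x * (1 - p) / d ^ 2 = (p * Real.exp x / d) * ((1 - p) / d) := by
      rw [div_mul_div_comm]; ring_nf
    set u := p * Real.exp x / d with hu'
    have h1u : (1 - p) / d = 1 - u := by
      rw [hu', eq_sub_iff_add_eq, ← add_div, div_eq_one_iff_eq hdpos.ne']
    rw [hu, h1u]
    nlinarith [sq_nonneg (u - 1/2)]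
  have hψmono : Monotone ψ :=
    monotone_of_deriv_nonneg (fun x => (hdψ x).differentiableAt)
      (fun x => by rw [(hdψ x).deriv]; exact hψnonneg x)
  have hψ0 : ψ 0 = 0 := by simp [hψ]
  have hφ0 : φ 0 = 0 := by simp [hφ]
  have hgoal : 0 ≤ φ h := by
    rcases le_or_gt 0 h with hh | hh
    · have := monotoneOn_of_deriv_nonneg (convex_Ici (0:ℝ))
        (Continuous.continuousOn (by
          have : Differentiable ℝ φ := fun x => (hdφ x).differentiableAt
          exact this.continuous))
        (fun x _ => ((hdφ x).differentiableAt).differentiableWithinAt)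
        (fun x hx => by
          rw [(hdφ x).deriv]
          have hx0 : (0:ℝ) ≤ x := le_of_lt (by simpa using hx)
          have := hψmono hx0
          rw [hψ0] at this; exact this)
        (Set.mem_Ici.mpr le_rfl) (Set.mem_Ici.mpr hh) hh
      rw [hφ0] at this; exact this
    · have := antitoneOn_of_deriv_nonpos (convex_Iic (0:ℝ))
        (Continuous.continuousOn (by
          have : Differentiable ℝ φ := fun x => (hdφ x).differentiableAt
          exact this.continuous))
        (fun x _ => ((hdφ x).differentiableAt).differentiableWithinAt)
        (fun x hx => by
          rw [(hdφ x).deriv]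
          have hx0 : x ≤ 0 := le_of_lt (by simpa using hx)
          have := hψmono hx0
          rw [hψ0] at this; exact this)
        (Set.mem_Iic.mpr hh.le) (Set.mem_Iic.mpr le_rfl) hh.le
      rw [hφ0] at this; exact this
  have := hgoal
  simp only [hφ] at this
  linarith

lemma hoeffding_finite {J : ℕ} (w x : Fin J → ℝ) (hw : ∀ j, 0 ≤ w j)
    (hsum : ∑ j, w j = 1) {B : ℝ} (hB : 0 < B) (hx : ∀ j, x j ∈ Set.Icc 0 B) (lam : ℝ) :
    ∑ j, w j * Real.exp (lam * x j) ≤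
      Real.exp (lam * (∑ j, w j * x j) + lam ^ 2 * B ^ 2 / 8) := by
  set μ := ∑ j, w j * x j with hμ
  have hμ0 : 0 ≤ μ := Finset.sum_nonneg fun j _ => mul_nonneg (hw j) (hx j).1
  have hμB : μ ≤ B := by
    calc μ ≤ ∑ j, w j * B := Finset.sum_le_sum fun j _ =>
            mul_le_mul_of_nonneg_left (hx j).2 (hw j)
      _ = B := by rw [← Finset.sum_mul, hsum, one_mul]
  have hconv : ∀ j, Real.exp (lam * x j) ≤
      (1 - x j / B) * 1 + (x j / B) * Real.exp (lam * B) := by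
    intro j
    have ht0 : 0 ≤ x j / B := div_nonneg (hx j).1 hB.le
    have ht1 : x j / B ≤ 1 := (div_le_one hB).mpr (hx j).2
    have := convexOn_exp.2 (Set.mem_univ (0:ℝ)) (Set.mem_univ (lam * B))
      (by linarith : (0:ℝ) ≤ 1 - x j / B) ht0 (by ring)
    have harg : (1 - x j / B) • (0:ℝ) + (x j / B) • (lam * B) = lam * x j := by
      rw [smul_eq_mul, smul_eq_mul, mul_zero, zero_add, div_mul_eq_mul_div, div_eq_iff hB.ne']; ring
    rw [harg] at this
    simpa [smul_eq_mul] using this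
  have step1 : ∑ j, w j * Real.exp (lam * x j) ≤ 1 - μ / B + (μ / B) * Real.exp (lam * B) := by
    calc ∑ j, w j * Real.exp (lam * x j)
        ≤ ∑ j, w j * ((1 - x j / B) * 1 + (x j / B) * Real.exp (lam * B)) :=
          Finset.sum_le_sum fun j _ => mul_le_mul_of_nonneg_left (hconv j) (hw j)
      _ = (∑ j, w j) - (∑ j, w j * x j) / B + ((∑ j, w j * x j) / B) * Real.exp (lam * B) := by
          rw [Finset.sum_div, Finset.sum_mul, ← Finset.sum_sub_distrib, ← Finset.sum_add_distrib]
          exact Finset.sum_congr rfl fun j _ => by field_simp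
      _ = 1 - μ / B + (μ / B) * Real.exp (lam * B) := by rw [hsum, hμ]
  have hP0 : 0 ≤ μ / B := div_nonneg hμ0 hB.le
  have hP1 : μ / B ≤ 1 := (div_le_one hB).mpr hμB
  have step2 : Real.log (1 - μ / B + (μ / B) * Real.exp (lam * B)) ≤
      (μ / B) * (lam * B) + (lam * B) ^ 2 / 8 := hoeffding_scalar hP0 hP1 (lam * B)
  have hpos : 0 < 1 - μ / B + (μ / B) * Real.exp (lam * B) := by
    rcases le_or_gt (Real.exp (lam * B)) 1 with hx1 | hx1
    · nlinarith [Real.exp_pos (lam * B)]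
    · nlinarith
  calc ∑ j, w j * Real.exp (lam * x j) ≤ 1 - μ / B + (μ / B) * Real.exp (lam * B) := step1
    _ = Real.exp (Real.log (1 - μ / B + (μ / B) * Real.exp (lam * B))) := (Real.exp_log hpos).symm
    _ ≤ Real.exp (lam * μ + lam ^ 2 * B ^ 2 / 8) := by
        apply Real.exp_le_exp.mpr
        have h1 : (μ / B) * (lam * B) = lam * μ := by field_simp
        have h2 : (lam * B) ^ 2 / 8 = lam ^ 2 * B ^ 2 / 8 := by ring
        rw [h1, h2] at step2
        exact step2

lemma sum_inv_sqrt_le (T : ℕ) : ∑ i ∈ range T, 1 / Real.sqrt (i + 1) ≤ 2 * Real.sqrt T := by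
  induction T with
  | zero => simp
  | succ n ih =>
    rw [Finset.sum_range_succ]
    have h1 : Real.sqrt (n + 1) > 0 := Real.sqrt_pos.mpr (by positivity)
    have key : 1 / Real.sqrt (n + 1) ≤ 2 * Real.sqrt (n + 1) - 2 * Real.sqrt n := by
      rw [div_le_iff₀ h1]
      have hn : Real.sqrt n ≤ Real.sqrt (n + 1) := Real.sqrt_le_sqrt (by push_cast; linarith)
      have h2 : Real.sqrt n * Real.sqrt n = n := Real.mul_self_sqrt n.cast_nonneg
      have h3 : Real.sqrt ((n:ℝ) + 1) * Real.sqrt ((n:ℝ) + 1) = (n:ℝ) + 1 :=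
        Real.mul_self_sqrt (by positivity)
      nlinarith [Real.sqrt_nonneg n]
    push_cast
    linarith

lemma softmin_mono {J : ℕ} (hJ : 0 < J) (L : Fin J → ℝ) {q q' : ℝ} (hq : 0 < q) (hqq : q ≤ q') :
    -q * Real.log ((∑ j, Real.exp (-(L j) / q)) / J) ≤
      -q' * Real.log ((∑ j, Real.exp (-(L j) / q')) / J) := by
  have hq' : 0 < q' := lt_of_lt_of_le hq hqq
  have hJ0 : (0:ℝ) < J := by exact_mod_cast hJ
  set A : ℝ := (∑ j, Real.exp (-(L j) / q)) / J with hA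
  set A' : ℝ := (∑ j, Real.exp (-(L j) / q')) / J with hA'
  have hApos : 0 < A := by
    apply div_pos _ hJ0
    apply Finset.sum_pos (fun j _ => Real.exp_pos _)
    exact ⟨⟨0, hJ⟩, Finset.mem_univ _⟩
  have hA'pos : 0 < A' := by
    apply div_pos _ hJ0
    apply Finset.sum_pos (fun j _ => Real.exp_pos _)
    exact ⟨⟨0, hJ⟩, Finset.mem_univ _⟩
  have hp1 : (1:ℝ) ≤ q' / q := (one_le_div hq).mpr hqq
  have pm := Real.arith_mean_le_rpow_mean (Finset.univ) (fun _ : Fin J => (1:ℝ)/J)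
    (fun j => Real.exp (-(L j) / q'))
    (fun i _ => by positivity) (by simp; field_simp)
    (fun i _ => (Real.exp_pos _).le) hp1
  have e1 : ∑ j, (1:ℝ)/J * Real.exp (-(L j) / q') = A' := by
    rw [hA', Finset.sum_div]
    exact Finset.sum_congr rfl fun j _ => by ring
  have e2 : ∑ j, (1:ℝ)/J * Real.exp (-(L j) / q') ^ (q'/q : ℝ) = A := by
    rw [hA, Finset.sum_div]
    refine Finset.sum_congr rfl fun j _ => ?_
    rw [← Real.exp_mul]
    rw [show -(L j) / q' * (q'/q) = -(L j) / q by field_simp]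
    ring
  rw [e1, e2] at pm
  have e3 : (1:ℝ) / (q'/q) = q/q' := by field_simp
  rw [e3] at pm
  have hlog : Real.log A' ≤ (q/q') * Real.log A := by
    calc Real.log A' ≤ Real.log (A ^ (q/q' : ℝ)) :=
          Real.log_le_log hA'pos pm
      _ = (q/q') * Real.log A := Real.log_rpow hApos _
  have h4 : q' * Real.log A' ≤ q' * (q/q' * Real.log A) :=
    mul_le_mul_of_nonneg_left hlog hq'.le
  have h5 : q' * (q/q' * Real.log A) = q * Real.log A := by field_simp
  linarith

lemma sum_Icc_one_eq_range (g : ℕ → ℝ) (n : ℕ) :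
    ∑ t' ∈ Icc 1 n, g t' = ∑ i ∈ range n, g (i+1) := by
  rw [← Finset.Ico_add_one_right_eq_Icc, Finset.sum_Ico_eq_sum_range]
  simp [add_comm]

end Aux


/-- Theorem 3.6 (pathwise regret bound for Bandit Conformal with Experts):
with exponential expert weights `ω_{j,t} = exp(−(1/√(t+1))·∑_{t'≤t} Δ_{t'}·ρ_α(s_{t'}, τ_{j,t'−1}))`
and aggregated quantiles `τ̄_{t−1} = ∑_j ω_{j,t−1} τ_{j,t−1} / ∑_j ω_{j,t−1}`,
the average aggregated loss exceeds the best expert's average loss by at most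
`1/(4c²√T) + 2 ln J/√T`. -/
theorem stmt_17 (T J : ℕ) (hT : 1 ≤ T) (hJ : 2 ≤ J)
    (α c : ℝ) (hα : α ∈ Set.Icc (0 : ℝ) 1) (hc : c ∈ Set.Ioc (0 : ℝ) 1)
    (s : ℕ → ℝ) (Δ : ℕ → ℝ) (hΔ : ∀ t ∈ Icc 1 T, Δ t ∈ Set.Icc (0 : ℝ) (1 / c))
    (τ : Fin J → ℕ → ℝ)
    (hρbd : ∀ j : Fin J, ∀ t ∈ Icc 1 T,
      checkLoss α (s t) (τ j (t - 1)) ∈ Set.Icc (0 : ℝ) 1)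
    (W : Fin J → ℕ → ℝ)
    (hW : ∀ (j : Fin J) (t : ℕ), W j t = Real.exp (-(1 / Real.sqrt ((t : ℝ) + 1)) *
      ∑ t' ∈ Icc 1 t, Δ t' * checkLoss α (s t') (τ j (t' - 1))))
    (τbar : ℕ → ℝ)
    (hτbar : ∀ t ∈ Icc 1 T,
      τbar (t - 1) = (∑ j, W j (t - 1) * τ j (t - 1)) / (∑ j, W j (t - 1))) :
    (1 / (T : ℝ)) * ∑ t ∈ Icc 1 T, Δ t * checkLoss α (s t) (τbar (t - 1))
      - Finset.univ.inf' ⟨⟨0, by omega⟩, Finset.mem_univ _⟩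
          (fun j : Fin J =>
            (1 / (T : ℝ)) * ∑ t ∈ Icc 1 T, Δ t * checkLoss α (s t) (τ j (t - 1)))
      ≤ 1 / (4 * c ^ 2 * Real.sqrt T) + 2 * Real.log J / Real.sqrt T := by
  obtain ⟨hc0, hc1⟩ := hc
  have hJ0 : 0 < J := by omega
  have hTpos : (0:ℝ) < T := by exact_mod_cast hT
  -- losses and cumulative losses in range form
  set ℓ : Fin J → ℕ → ℝ := fun j i => Δ (i+1) * checkLoss α (s (i+1)) (τ j i) with hℓ
  set L : Fin J → ℕ → ℝ := fun j n => ∑ i ∈ range n, ℓ j i with hLdef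
  set q : ℕ → ℝ := fun n => Real.sqrt ((n:ℝ)+1) with hqdef
  have hqpos : ∀ n, 0 < q n := fun n => Real.sqrt_pos.mpr (by positivity)
  have hLsum : ∀ (j : Fin J) (n : ℕ),
      ∑ t' ∈ Icc 1 n, Δ t' * checkLoss α (s t') (τ j (t'-1)) = L j n := by
    intro j n
    rw [sum_Icc_one_eq_range, hLdef]
    exact Finset.sum_congr rfl fun i _ => by simp [hℓ]
  have hW' : ∀ (j : Fin J) (n : ℕ), W j n = Real.exp (-(L j n) / q n) := by
    intro j n
    rw [hW j n, hLsum j n]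
    congr 1
    rw [hqdef]
    ring
  have hWpos : ∀ (j : Fin J) (n : ℕ), 0 < W j n := fun j n => by
    rw [hW']; exact Real.exp_pos _
  -- potential
  set G : ℕ → ℝ := fun n => -(q n) * Real.log ((∑ j, W j n) / J) with hGdef
  have hG0 : G 0 = 0 := by
    have hW0 : ∀ j : Fin J, W j 0 = 1 := by
      intro j; rw [hW']; simp [hLdef]
    have hJne : (J:ℝ) ≠ 0 := by exact_mod_cast hJ0.ne'
    rw [hGdef]
    simp only
    rw [Finset.sum_congr rfl fun j _ => hW0 j, Finset.sum_const, Finset.card_univ,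
      Fintype.card_fin, nsmul_eq_mul, mul_one, div_self hJne, Real.log_one, mul_zero]
  -- per-step loss bound
  have hℓbd : ∀ (j : Fin J), ∀ i < T, ℓ j i ∈ Set.Icc (0:ℝ) (1/c) := by
    intro j i hi
    have hmem : i + 1 ∈ Icc 1 T := by rw [Finset.mem_Icc]; omega
    have h1 := hΔ (i+1) hmem
    have h2 := hρbd j (i+1) hmem
    simp only [Nat.add_sub_cancel] at h2
    constructor
    · exact mul_nonneg h1.1 h2.1
    · calc ℓ j i ≤ Δ (i+1) * 1 := mul_le_mul_of_nonneg_left h2.2 h1.1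
        _ ≤ 1/c := by rw [mul_one]; exact h1.2
  -- main per-step inequality
  have key : ∀ i < T, Δ (i+1) * checkLoss α (s (i+1)) (τbar i) ≤
      G (i+1) - G i + 1/(8*c^2) * (1/q i) := by
    intro i hi
    have hmem : i + 1 ∈ Icc 1 T := by rw [Finset.mem_Icc]; omega
    set Si := ∑ j, W j i with hSi
    have hSipos : 0 < Si := Finset.sum_pos (fun j _ => hWpos j i) ⟨⟨0, hJ0⟩, mem_univ _⟩
    set p : Fin J → ℝ := fun j => W j i / Si with hp
    have hppos : ∀ j, 0 < p j := fun j => div_pos (hWpos j i) hSipos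
    have hpnn : ∀ j, 0 ≤ p j := fun j => (hppos j).le
    have hpsum : ∑ j, p j = 1 := by
      rw [hp]; simp only
      rw [← Finset.sum_div, ← hSi, div_self hSipos.ne']
    have hτb : τbar i = ∑ j, p j * τ j i := by
      have h := hτbar (i+1) hmem
      simp only [Nat.add_sub_cancel] at h
      rw [h, Finset.sum_div]
      exact Finset.sum_congr rfl fun j _ => by rw [hp]; ring
    have hcx : checkLoss α (s (i+1)) (τbar i) ≤ ∑ j, p j * checkLoss α (s (i+1)) (τ j i) := by
      rw [hτb]
      exact checkLoss_convex p (fun j => τ j i) hpnn hpsum _ _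
    have hΔi := hΔ (i+1) hmem
    set μ := ∑ j, p j * ℓ j i with hμ
    have hstep1 : Δ (i+1) * checkLoss α (s (i+1)) (τbar i) ≤ μ := by
      calc Δ (i+1) * checkLoss α (s (i+1)) (τbar i)
          ≤ Δ (i+1) * ∑ j, p j * checkLoss α (s (i+1)) (τ j i) :=
            mul_le_mul_of_nonneg_left hcx hΔi.1
        _ = μ := by
            rw [hμ, Finset.mul_sum]
            exact Finset.sum_congr rfl fun j _ => by rw [hℓ]; ring
    have hB : (0:ℝ) < 1/c := by positivity
    have hhoef := hoeffding_finite p (fun j => ℓ j i) hpnn hpsum hB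
      (fun j => hℓbd j i hi) (-(1/q i))
    -- identify the weighted sum with ratio of potentials
    have hqi := hqpos i
    have hLsucc : ∀ j : Fin J, L j (i+1) = L j i + ℓ j i := by
      intro j; rw [hLdef]; exact Finset.sum_range_succ _ _
    have hsumA : ∑ j, p j * Real.exp (-(1/q i) * ℓ j i)
        = (∑ j, Real.exp (-(L j (i+1)) / q i)) / Si := by
      rw [Finset.sum_div]
      refine Finset.sum_congr rfl fun j _ => ?_
      rw [hp]
      simp only
      rw [hW' j i, div_mul_eq_mul_div, ← Real.exp_add]
      congr 2
      rw [hLsucc j]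
      field_simp
      ring
    have hνpos : (0:ℝ) < ∑ j, Real.exp (-(L j (i+1)) / q i) :=
      Finset.sum_pos (fun j _ => Real.exp_pos _) ⟨⟨0, hJ0⟩, mem_univ _⟩
    have hSpos : 0 < ∑ j, p j * Real.exp (-(1/q i) * ℓ j i) := by
      rw [hsumA]; exact div_pos hνpos hSipos
    have hlog1 : Real.log (∑ j, p j * Real.exp (-(1/q i) * ℓ j i))
        ≤ -(1/q i) * μ + (1/q i)^2 * (1/c)^2 / 8 := by
      calc Real.log (∑ j, p j * Real.exp (-(1/q i) * ℓ j i))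
          ≤ Real.log (Real.exp (-(1/q i) * μ + (-(1/q i))^2 * (1/c)^2 / 8)) :=
            Real.log_le_log hSpos hhoef
        _ = -(1/q i) * μ + (1/q i)^2 * (1/c)^2 / 8 := by rw [Real.log_exp]; ring
    have e4 : q i * (-(1/q i) * μ + (1/q i)^2 * (1/c)^2 / 8)
        = -μ + 1/(8*c^2) * (1/q i) := by
      field_simp
    have h5 : μ ≤ -(q i) * Real.log (∑ j, p j * Real.exp (-(1/q i) * ℓ j i))
        + 1/(8*c^2) * (1/q i) := by
      have := mul_le_mul_of_nonneg_left hlog1 hqi.le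
      rw [e4] at this
      nlinarith
    have hJR : (0:ℝ) < (J:ℝ) := by exact_mod_cast hJ0
    have hlogsplit : Real.log ((∑ j, Real.exp (-(L j (i+1)) / q i)) / Si)
        = Real.log ((∑ j, Real.exp (-(L j (i+1)) / q i)) / J) - Real.log (Si / J) := by
      rw [Real.log_div hνpos.ne' hSipos.ne', Real.log_div hνpos.ne' hJR.ne',
        Real.log_div hSipos.ne' hJR.ne']
      ring
    have hsoft : -(q i) * Real.log ((∑ j, Real.exp (-(L j (i+1)) / q i)) / J) ≤ G (i+1) := by
      have hmono : q i ≤ q (i+1) := by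
        rw [hqdef]
        apply Real.sqrt_le_sqrt
        push_cast
        linarith
      have hmain := softmin_mono hJ0 (fun j => L j (i+1)) (hqpos i) hmono
      have hGsucc : G (i+1)
          = -(q (i+1)) * Real.log ((∑ j, Real.exp (-(L j (i+1)) / q (i+1))) / J) := by
        rw [hGdef]
        simp only
        rw [Finset.sum_congr rfl fun j _ => hW' j (i+1)]
      rw [hGsucc]
      exact hmain
    have hGi : G i = -(q i) * Real.log (Si / J) := by rw [hGdef]
    calc Δ (i+1) * checkLoss α (s (i+1)) (τbar i) ≤ μ := hstep1
      _ ≤ -(q i) * Real.log (∑ j, p j * Real.exp (-(1/q i) * ℓ j i))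
            + 1/(8*c^2) * (1/q i) := h5
      _ = -(q i) * Real.log ((∑ j, Real.exp (-(L j (i+1)) / q i)) / J)
            + (q i) * Real.log (Si / J) + 1/(8*c^2) * (1/q i) := by
          rw [hsumA, hlogsplit]; ring
      _ ≤ G (i+1) - G i + 1/(8*c^2) * (1/q i) := by
          rw [hGi]; linarith [hsoft]
  -- summation and telescoping
  set Sbar := ∑ i ∈ range T, Δ (i+1) * checkLoss α (s (i+1)) (τbar i) with hSbar
  have hsumkey : Sbar ≤ G T - G 0 + 1/(8*c^2) * ∑ i ∈ range T, (1/q i) := by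
    calc Sbar ≤ ∑ i ∈ range T, (G (i+1) - G i + 1/(8*c^2) * (1/q i)) :=
          Finset.sum_le_sum fun i hi => key i (Finset.mem_range.mp hi)
      _ = (∑ i ∈ range T, (G (i+1) - G i)) + ∑ i ∈ range T, 1/(8*c^2) * (1/q i) :=
          Finset.sum_add_distrib
      _ = G T - G 0 + 1/(8*c^2) * ∑ i ∈ range T, (1/q i) := by
          rw [Finset.sum_range_sub G, ← Finset.mul_sum]
  have hqsum : ∑ i ∈ range T, (1/q i) ≤ 2 * Real.sqrt T := by
    have h := sum_inv_sqrt_le T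
    simpa [hqdef] using h
  have hlogJnn : 0 ≤ Real.log J := Real.log_nonneg (by exact_mod_cast one_le_two.trans (by exact_mod_cast hJ : (2:ℝ) ≤ J))
  have hT1 : (1:ℝ) ≤ T := by exact_mod_cast hT
  have hsqT : Real.sqrt ((T:ℝ)+1) ≤ 2 * Real.sqrt T := by
    have h4 : ((T:ℝ)+1) ≤ 4 * T := by linarith
    calc Real.sqrt ((T:ℝ)+1) ≤ Real.sqrt (4 * T) := Real.sqrt_le_sqrt h4
      _ = 2 * Real.sqrt T := by
          rw [Real.sqrt_mul (by norm_num : (0:ℝ) ≤ 4)]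
          congr 1
          rw [show (4:ℝ) = 2^2 by norm_num]
          exact Real.sqrt_sq (by norm_num)
  have hGT : ∀ j : Fin J, G T ≤ L j T + q T * Real.log J := by
    intro j
    have hJR : (0:ℝ) < (J:ℝ) := by exact_mod_cast hJ0
    have hle : W j T ≤ ∑ k, W k T :=
      Finset.single_le_sum (fun k _ => (hWpos k T).le) (mem_univ j)
    have hWjpos := hWpos j T
    have hlb : Real.log (W j T / J) ≤ Real.log ((∑ k, W k T) / J) :=
      Real.log_le_log (div_pos hWjpos hJR) (by gcongr)
    have hWlog : Real.log (W j T / J) = -(L j T)/q T - Real.log J := by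
      rw [Real.log_div hWjpos.ne' hJR.ne', hW' j T, Real.log_exp]
    have h6 : q T * Real.log (W j T / J) ≤ q T * Real.log ((∑ k, W k T) / J) :=
      mul_le_mul_of_nonneg_left hlb (hqpos T).le
    have h7 : -(q T) * (-(L j T)/q T - Real.log J) = L j T + q T * Real.log J := by
      field_simp [(hqpos T).ne']
      ring
    have hGTeq : G T = -(q T) * Real.log ((∑ k, W k T) / J) := by rw [hGdef]
    rw [hGTeq, ← h7, ← hWlog]
    linarith
  -- rewrite the goal
  obtain ⟨j₀, -, hj₀⟩ := Finset.exists_mem_eq_inf'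
    (⟨⟨0, by omega⟩, Finset.mem_univ _⟩ : (Finset.univ : Finset (Fin J)).Nonempty)
    (fun j : Fin J => (1 / (T : ℝ)) * ∑ t ∈ Icc 1 T, Δ t * checkLoss α (s t) (τ j (t - 1)))
  rw [hj₀]
  rw [hLsum j₀ T]
  have hIccbar : ∑ t ∈ Icc 1 T, Δ t * checkLoss α (s t) (τbar (t-1)) = Sbar := by
    rw [sum_Icc_one_eq_range]
    exact Finset.sum_congr rfl fun i _ => by simp
  rw [hIccbar]
  have hbound : Sbar - L j₀ T ≤ 2*Real.sqrt T*Real.log J + Real.sqrt T/(4*c^2) := by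
    have h1 := hsumkey
    have h2 := hGT j₀
    have h3 : 1/(8*c^2) * (∑ i ∈ range T, (1/q i)) ≤ 1/(8*c^2) * (2*Real.sqrt T) :=
      mul_le_mul_of_nonneg_left hqsum (by positivity)
    have h4 : q T * Real.log J ≤ 2*Real.sqrt T*Real.log J := by
      have : q T ≤ 2 * Real.sqrt T := by rw [hqdef]; exact hsqT
      exact mul_le_mul_of_nonneg_right this hlogJnn
    have e5 : 1/(8*c^2) * (2*Real.sqrt T) = Real.sqrt T/(4*c^2) := by ring
    rw [hG0] at h1
    linarith
  have hsq : Real.sqrt T * Real.sqrt T = (T:ℝ) := Real.mul_self_sqrt (by positivity)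
  have hsTpos : 0 < Real.sqrt T := Real.sqrt_pos.mpr hTpos
  have efin : (1/(T:ℝ)) * (2*Real.sqrt T*Real.log J + Real.sqrt T/(4*c^2))
      = 1 / (4 * c ^ 2 * Real.sqrt T) + 2 * Real.log J / Real.sqrt T := by
    field_simp
    linear_combination (1 + 8 * Real.log J * c^2) * hsq
  calc 1/(T:ℝ) * Sbar - 1/(T:ℝ) * (L j₀ T) = (1/(T:ℝ)) * (Sbar - L j₀ T) := by ring
    _ ≤ (1/(T:ℝ)) * (2*Real.sqrt T*Real.log J + Real.sqrt T/(4*c^2)) :=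
        mul_le_mul_of_nonneg_left hbound (by positivity)
    _ = _ := efin
end
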